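/- A bicomplex matrix A ∈ 𝔹ℂ^{n×n} is hyperbolic positive if and only if there exists an upper triangular bicomplex matrix U ∈ 𝔹ℂ^{n×n} (i.e. both idempotent components of U are upper triangular complex matrices) such that A = (U*)ᵗ·U. -/

import Mathlib

open Complex Matrix Kronecker BigOperators

open scoped ComplexOrder

/-- Bicomplex numbers, modeled as pairs `(z₁, z₂) ∈ ℂ × ℂ` representing `z₁ + j z₂`.
Addition is the componentwise (Prod) addition. -/
abbrev BC : Type := ℂ × ℂ

noncomputable section

/-- Bicomplex multiplication: `(z₁,z₂)·(w₁,w₂) = (z₁w₁ − z₂w₂, z₁w₂ + z₂w₁)`. -/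
def bcMul (z w : BC) : BC := (z.1 * w.1 - z.2 * w.2, z.1 * w.2 + z.2 * w.1)

/-- The `*`-conjugate `Z* = conj z₁ − j conj z₂`. -/
def bcStar (z : BC) : BC := ((starRingEnd ℂ) z.1, -((starRingEnd ℂ) z.2))

/-- First idempotent component `λ₁ = z₁ − i z₂`. -/
def idem1 (z : BC) : ℂ := z.1 - Complex.I * z.2

/-- Second idempotent component `λ₂ = z₁ + i z₂`. -/
def idem2 (z : BC) : ℂ := z.1 + Complex.I * z.2

/-- Membership in `𝔻⁺`: both idempotent components are nonnegative real numbers. -/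
def inDplus (z : BC) : Prop :=
  (idem1 z).im = 0 ∧ 0 ≤ (idem1 z).re ∧ (idem2 z).im = 0 ∧ 0 ≤ (idem2 z).re

/-- A bicomplex matrix `A = A₁ + j A₂` is a pair of complex matrices. -/
abbrev BCMat (I J : Type) : Type := Matrix I J ℂ × Matrix I J ℂ

/-- Bicomplex matrix multiplication, induced by bicomplex multiplication. -/
def bmul {I J K : Type} [Fintype J] (A : BCMat I J) (B : BCMat J K) : BCMat I K :=
  (A.1 * B.1 - A.2 * B.2, A.1 * B.2 + A.2 * B.1)

/-- `(A*)ᵗ`: the entrywise `*`-conjugate followed by transpose. -/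
def bcStarT {I J : Type} (A : BCMat I J) : BCMat J I := (A.1ᴴ, -(A.2ᴴ))

/-- The `(j,k)` entry of a bicomplex matrix, as a bicomplex number. -/
def bcEntry {I J : Type} (A : BCMat I J) (j : I) (k : J) : BC := (A.1 j k, A.2 j k)

/-- First idempotent component `𝒜₁ = A₁ − i A₂` of a bicomplex matrix. -/
def midem1 {I J : Type} (A : BCMat I J) : Matrix I J ℂ := A.1 - Complex.I • A.2

/-- Second idempotent component `𝒜₂ = A₁ + i A₂` of a bicomplex matrix. -/
def midem2 {I J : Type} (A : BCMat I J) : Matrix I J ℂ := A.1 + Complex.I • A.2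

/-- The bicomplex number `(c*)ᵗ · A · c`. -/
def quadForm {I : Type} [Fintype I] (A : BCMat I I) (c : I → BC) : BC :=
  ∑ j, ∑ k, bcMul (bcStar (c j)) (bcMul (bcEntry A j k) (c k))

/-- `A` is hyperbolic positive if `(c*)ᵗ · A · c ∈ 𝔻⁺` for every bicomplex vector `c`. -/
def HypPos {I : Type} [Fintype I] (A : BCMat I I) : Prop :=
  ∀ c : I → BC, inDplus (quadForm A c)

/-- Bicomplex trace `Tr(A) = Tr(A₁) + j Tr(A₂)`. -/
def bcTrace {I : Type} [Fintype I] (A : BCMat I I) : BC := (A.1.trace, A.2.trace)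

/-- The bicomplex tensor product
`A ⊗ⱼ B = (A₁⊗B₁ − A₂⊗B₂) + j (A₁⊗B₂ + A₂⊗B₁)`. -/
def bkron {I J K L : Type} (A : BCMat I J) (B : BCMat K L) : BCMat (I × K) (J × L) :=
  (A.1 ⊗ₖ B.1 - A.2 ⊗ₖ B.2, A.1 ⊗ₖ B.2 + A.2 ⊗ₖ B.1)

end


noncomputable section AuxProof

open scoped InnerProductSpace

lemma idem1_bcMul' (z w : BC) : idem1 (bcMul z w) = idem1 z * idem1 w := by
  simp only [idem1, bcMul]
  linear_combination (-(z.2 * w.2)) * Complex.I_sq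

lemma idem2_bcMul' (z w : BC) : idem2 (bcMul z w) = idem2 z * idem2 w := by
  simp only [idem2, bcMul]
  linear_combination (-(z.2 * w.2)) * Complex.I_sq

lemma idem1_bcStar' (z : BC) : idem1 (bcStar z) = (starRingEnd ℂ) (idem1 z) := by
  simp only [idem1, bcStar, _root_.map_sub, _root_.map_mul, Complex.conj_I]
  ring

lemma idem2_bcStar' (z : BC) : idem2 (bcStar z) = (starRingEnd ℂ) (idem2 z) := by
  simp only [idem2, bcStar, _root_.map_add, _root_.map_mul, Complex.conj_I]
  ring

lemma idem1_sum' {m : Type} [Fintype m] (f : m → BC) :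
    idem1 (∑ j, f j) = ∑ j, idem1 (f j) := by
  simp [idem1, Prod.fst_sum, Prod.snd_sum, Finset.sum_sub_distrib, Finset.mul_sum]

lemma idem2_sum' {m : Type} [Fintype m] (f : m → BC) :
    idem2 (∑ j, f j) = ∑ j, idem2 (f j) := by
  simp [idem2, Prod.fst_sum, Prod.snd_sum, Finset.sum_add_distrib, Finset.mul_sum]

lemma idem1_quadForm' {n : ℕ} (A : BCMat (Fin n) (Fin n)) (c : Fin n → BC) :
    idem1 (quadForm A c)
      = star (fun j => idem1 (c j)) ⬝ᵥ (midem1 A *ᵥ fun j => idem1 (c j)) := by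
  unfold quadForm
  rw [idem1_sum']
  simp only [idem1_sum', idem1_bcMul', idem1_bcStar']
  simp only [dotProduct, mulVec, Pi.star_apply, Finset.mul_sum, starRingEnd_apply]
  refine Finset.sum_congr rfl fun j _ => Finset.sum_congr rfl fun k _ => ?_
  simp only [idem1, bcEntry, midem1, Matrix.sub_apply, Matrix.smul_apply, smul_eq_mul]

lemma idem2_quadForm' {n : ℕ} (A : BCMat (Fin n) (Fin n)) (c : Fin n → BC) :
    idem2 (quadForm A c)
      = star (fun j => idem2 (c j)) ⬝ᵥ (midem2 A *ᵥ fun j => idem2 (c j)) := by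
  unfold quadForm
  rw [idem2_sum']
  simp only [idem2_sum', idem2_bcMul', idem2_bcStar']
  simp only [dotProduct, mulVec, Pi.star_apply, Finset.mul_sum, starRingEnd_apply]
  refine Finset.sum_congr rfl fun j _ => Finset.sum_congr rfl fun k _ => ?_
  simp only [idem2, bcEntry, midem2, Matrix.add_apply, Matrix.smul_apply, smul_eq_mul]

lemma herm_of_quad_real' {n : ℕ} (M : Matrix (Fin n) (Fin n) ℂ)
    (h : ∀ x : Fin n → ℂ, (star x ⬝ᵥ M *ᵥ x).im = 0) : M.IsHermitian := by
  rw [Matrix.isHermitian_iff_isSymmetric, LinearMap.isSymmetric_iff_inner_map_self_real]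
  intro v
  set w : Fin n → ℂ := (WithLp.equiv 2 (Fin n → ℂ)) v with hw
  have key : ⟪Matrix.toEuclideanLin M v, v⟫_ℂ = (starRingEnd ℂ) (star w ⬝ᵥ M *ᵥ w) := by
    simp only [toEuclideanLin_apply, PiLp.inner_apply,
      RCLike.inner_apply, dotProduct, Pi.star_apply, map_sum]
    refine Finset.sum_congr rfl fun i _ => ?_
    simp only [_root_.map_mul, starRingEnd_apply, star_star]
    rfl
  rw [key, Complex.conj_conj]
  exact ((Complex.conj_eq_iff_im).2 (h w)).symm

lemma psd_cholesky' {n : ℕ} {M : Matrix (Fin n) (Fin n) ℂ} (hM : M.PosSemidef) :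
    ∃ T : Matrix (Fin n) (Fin n) ℂ, (∀ i j, j < i → T i j = 0) ∧ M = Tᴴ * T := by
  obtain ⟨B, rfl⟩ : ∃ B : Matrix (Fin n) (Fin n) ℂ, M = Bᴴ * B := by
    open scoped MatrixOrder in exact CStarAlgebra.nonneg_iff_eq_star_mul_self.mp hM.nonneg
  have hcard : Module.finrank ℂ (EuclideanSpace ℂ (Fin n)) = Fintype.card (Fin n) := by
    simp
  haveI : WellFoundedLT (Fin n) := inferInstance
  set f : Fin n → EuclideanSpace ℂ (Fin n) :=
    fun j => (WithLp.equiv 2 (Fin n → ℂ)).symm (fun i => B i j) with hf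
  set Q : OrthonormalBasis (Fin n) ℂ (EuclideanSpace ℂ (Fin n)) :=
    InnerProductSpace.gramSchmidtOrthonormalBasis hcard f with hQ
  refine ⟨Matrix.of fun i j => ⟪Q i, f j⟫_ℂ, fun i j hji => ?_, ?_⟩
  · exact InnerProductSpace.gramSchmidtOrthonormalBasis_inv_triangular hcard f hji
  · ext i j
    rw [Matrix.mul_apply]
    calc (Bᴴ * B) i j = ⟪f i, f j⟫_ℂ := by
          simp [Matrix.mul_apply, PiLp.inner_apply, RCLike.inner_apply, hf,
            Matrix.conjTranspose_apply, mul_comm]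
      _ = ∑ k, ⟪f i, Q k⟫_ℂ * ⟪Q k, f j⟫_ℂ := (Q.sum_inner_mul_inner (f i) (f j)).symm
      _ = ∑ k, (Matrix.of fun i j => ⟪Q i, f j⟫_ℂ)ᴴ i k
            * (Matrix.of fun i j => ⟪Q i, f j⟫_ℂ) k j := by
          refine Finset.sum_congr rfl fun k _ => ?_
          rw [Matrix.conjTranspose_apply]
          rw [Matrix.of_apply, Matrix.of_apply, ← inner_conj_symm (f i)]; rfl

lemma bcmat_ext' {I J : Type} {A B : BCMat I J}
    (h1 : midem1 A = midem1 B) (h2 : midem2 A = midem2 B) : A = B := by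
  have hfst : A.1 = B.1 := by
    ext i j
    have e1 : A.1 i j - Complex.I * A.2 i j = B.1 i j - Complex.I * B.2 i j := by
      have := congrFun (congrFun h1 i) j
      simpa [midem1] using this
    have e2 : A.1 i j + Complex.I * A.2 i j = B.1 i j + Complex.I * B.2 i j := by
      have := congrFun (congrFun h2 i) j
      simpa [midem2] using this
    linear_combination (e1 + e2) / 2
  have hsnd : A.2 = B.2 := by
    ext i j
    have e1 : A.1 i j - Complex.I * A.2 i j = B.1 i j - Complex.I * B.2 i j := by
      have := congrFun (congrFun h1 i) j
      simpa [midem1] using this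
    have e2 : A.1 i j + Complex.I * A.2 i j = B.1 i j + Complex.I * B.2 i j := by
      have := congrFun (congrFun h2 i) j
      simpa [midem2] using this
    linear_combination (e2 - e1) * (-Complex.I/2) + (A.2 i j - B.2 i j) * Complex.I_sq
  exact Prod.ext hfst hsnd

lemma midem1_bmul' {I J K : Type} [Fintype J] (A : BCMat I J) (B : BCMat J K) :
    midem1 (bmul A B) = midem1 A * midem1 B := by
  have key : (Complex.I • A.2) * (Complex.I • B.2) = -(A.2 * B.2) := by
    rw [Matrix.smul_mul, Matrix.mul_smul, smul_smul, Complex.I_mul_I, neg_one_smul]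
  show (A.1 * B.1 - A.2 * B.2) - Complex.I • (A.1 * B.2 + A.2 * B.1)
      = (A.1 - Complex.I • A.2) * (B.1 - Complex.I • B.2)
  rw [Matrix.sub_mul, Matrix.mul_sub, Matrix.mul_sub, key, Matrix.mul_smul, Matrix.smul_mul,
    smul_add]
  abel

lemma midem2_bmul' {I J K : Type} [Fintype J] (A : BCMat I J) (B : BCMat J K) :
    midem2 (bmul A B) = midem2 A * midem2 B := by
  have key : (Complex.I • A.2) * (Complex.I • B.2) = -(A.2 * B.2) := by
    rw [Matrix.smul_mul, Matrix.mul_smul, smul_smul, Complex.I_mul_I, neg_one_smul]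
  show (A.1 * B.1 - A.2 * B.2) + Complex.I • (A.1 * B.2 + A.2 * B.1)
      = (A.1 + Complex.I • A.2) * (B.1 + Complex.I • B.2)
  rw [Matrix.add_mul, Matrix.mul_add, Matrix.mul_add, key, Matrix.mul_smul, Matrix.smul_mul,
    smul_add]
  abel

lemma midem1_bcStarT' {I J : Type} (U : BCMat I J) :
    midem1 (bcStarT U) = (midem1 U)ᴴ := by
  simp only [midem1, bcStarT, Matrix.conjTranspose_sub, Matrix.conjTranspose_smul,
    Complex.star_def, Complex.conj_I, neg_smul, sub_neg_eq_add, smul_neg, neg_neg]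

lemma midem2_bcStarT' {I J : Type} (U : BCMat I J) :
    midem2 (bcStarT U) = (midem2 U)ᴴ := by
  simp only [midem2, bcStarT, Matrix.conjTranspose_add, Matrix.conjTranspose_smul,
    Complex.star_def, Complex.conj_I, neg_smul, smul_neg, neg_neg]

end AuxProof

noncomputable section

/-- `A` is hyperbolic positive iff `A = (U*)ᵗ · U` for some
bicomplex matrix `U` both of whose idempotent components are upper triangular. -/
theorem hypPos_iff_upper_triangular {n : ℕ} (A : BCMat (Fin n) (Fin n)) :
    HypPos A ↔
      ∃ U : BCMat (Fin n) (Fin n),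
        (∀ i j : Fin n, j < i → midem1 U i j = 0) ∧
        (∀ i j : Fin n, j < i → midem2 U i j = 0) ∧
        A = bmul (bcStarT U) U := by
  constructor
  · intro hA
    have key1 : ∀ x : Fin n → ℂ, ∃ c : Fin n → BC, (fun j => idem1 (c j)) = x := by
      intro x
      refine ⟨fun j => (x j / 2, Complex.I * x j / 2), funext fun j => ?_⟩
      simp only [idem1]
      linear_combination (-(x j)/2) * Complex.I_sq
    have key2 : ∀ y : Fin n → ℂ, ∃ c : Fin n → BC, (fun j => idem2 (c j)) = y := by
      intro y
      refine ⟨fun j => (y j / 2, -(Complex.I * y j) / 2), funext fun j => ?_⟩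
      simp only [idem2]
      linear_combination (-(y j)/2) * Complex.I_sq
    have hpsd1 : (midem1 A).PosSemidef := by
      have hquad : ∀ x : Fin n → ℂ,
          (star x ⬝ᵥ midem1 A *ᵥ x).im = 0 ∧ 0 ≤ (star x ⬝ᵥ midem1 A *ᵥ x).re := by
        intro x
        obtain ⟨c, hc⟩ := key1 x
        have h := hA c
        rw [← hc, ← idem1_quadForm']
        exact ⟨h.1, h.2.1⟩
      refine Matrix.PosSemidef.of_dotProduct_mulVec_nonneg (herm_of_quad_real' _ fun x => (hquad x).1) fun x => ?_
      rw [Complex.le_def]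
      exact ⟨by simpa using (hquad x).2, by simpa using (hquad x).1.symm⟩
    have hpsd2 : (midem2 A).PosSemidef := by
      have hquad : ∀ x : Fin n → ℂ,
          (star x ⬝ᵥ midem2 A *ᵥ x).im = 0 ∧ 0 ≤ (star x ⬝ᵥ midem2 A *ᵥ x).re := by
        intro x
        obtain ⟨c, hc⟩ := key2 x
        have h := hA c
        rw [← hc, ← idem2_quadForm']
        exact ⟨h.2.2.1, h.2.2.2⟩
      refine Matrix.PosSemidef.of_dotProduct_mulVec_nonneg (herm_of_quad_real' _ fun x => (hquad x).1) fun x => ?_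
      rw [Complex.le_def]
      exact ⟨by simpa using (hquad x).2, by simpa using (hquad x).1.symm⟩
    obtain ⟨T₁, hT₁, hM₁⟩ := psd_cholesky' hpsd1
    obtain ⟨T₂, hT₂, hM₂⟩ := psd_cholesky' hpsd2
    refine ⟨(((2:ℂ)⁻¹) • (T₁ + T₂), ((Complex.I/2)) • (T₁ - T₂)), ?_, ?_, ?_⟩
    · intro i j hji
      have : midem1 (((2:ℂ)⁻¹ • (T₁ + T₂), (Complex.I/2) • (T₁ - T₂)) : BCMat (Fin n) (Fin n))
          = T₁ := by
        ext a b
        simp only [midem1, Matrix.sub_apply, Matrix.smul_apply, Matrix.add_apply,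
          smul_eq_mul]
        linear_combination ((T₂ a b - T₁ a b)/2) * Complex.I_sq
      rw [this]
      exact hT₁ i j hji
    · intro i j hji
      have : midem2 (((2:ℂ)⁻¹ • (T₁ + T₂), (Complex.I/2) • (T₁ - T₂)) : BCMat (Fin n) (Fin n))
          = T₂ := by
        ext a b
        simp only [midem2, Matrix.sub_apply, Matrix.smul_apply, Matrix.add_apply,
          smul_eq_mul]
        linear_combination ((T₁ a b - T₂ a b)/2) * Complex.I_sq
      rw [this]
      exact hT₂ i j hji
    · have hU1 : midem1 (((2:ℂ)⁻¹ • (T₁ + T₂), (Complex.I/2) • (T₁ - T₂))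
          : BCMat (Fin n) (Fin n)) = T₁ := by
        ext a b
        simp only [midem1, Matrix.sub_apply, Matrix.smul_apply, Matrix.add_apply,
          smul_eq_mul]
        linear_combination ((T₂ a b - T₁ a b)/2) * Complex.I_sq
      have hU2 : midem2 (((2:ℂ)⁻¹ • (T₁ + T₂), (Complex.I/2) • (T₁ - T₂))
          : BCMat (Fin n) (Fin n)) = T₂ := by
        ext a b
        simp only [midem2, Matrix.sub_apply, Matrix.smul_apply, Matrix.add_apply,
          smul_eq_mul]
        linear_combination ((T₁ a b - T₂ a b)/2) * Complex.I_sq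
      apply bcmat_ext'
      · rw [midem1_bmul', midem1_bcStarT', hU1, ← hM₁]
      · rw [midem2_bmul', midem2_bcStarT', hU2, ← hM₂]
  · rintro ⟨U, -, -, rfl⟩
    intro c
    have h1 : midem1 (bmul (bcStarT U) U) = (midem1 U)ᴴ * midem1 U := by
      rw [midem1_bmul', midem1_bcStarT']
    have h2 : midem2 (bmul (bcStarT U) U) = (midem2 U)ᴴ * midem2 U := by
      rw [midem2_bmul', midem2_bcStarT']
    have q1 : idem1 (quadForm (bmul (bcStarT U) U) c)
        = star (fun j => idem1 (c j)) ⬝ᵥ (((midem1 U)ᴴ * midem1 U) *ᵥ fun j => idem1 (c j)) := by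
      rw [idem1_quadForm', h1]
    have q2 : idem2 (quadForm (bmul (bcStarT U) U) c)
        = star (fun j => idem2 (c j)) ⬝ᵥ (((midem2 U)ᴴ * midem2 U) *ᵥ fun j => idem2 (c j)) := by
      rw [idem2_quadForm', h2]
    have pos1 := (Matrix.posSemidef_conjTranspose_mul_self (midem1 U)).dotProduct_mulVec_nonneg fun j => idem1 (c j)
    have pos2 := (Matrix.posSemidef_conjTranspose_mul_self (midem2 U)).dotProduct_mulVec_nonneg fun j => idem2 (c j)
    rw [Complex.le_def] at pos1 pos2
    exact ⟨by rw [q1]; simpa using pos1.2.symm, by rw [q1]; simpa using pos1.1,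
      by rw [q2]; simpa using pos2.2.symm, by rw [q2]; simpa using pos2.1⟩


end
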